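/- Let G act primitively on the vertices and transitively on the arcs of a locally finite connectivity-one digraph Γ, and suppose some lobe Λ of Γ is finite with at least three vertices. If T is any tree on which G acts, and the setwise stabiliser G_{Λ} contains no hyperbolic element of Aut T, and G_{Λ} either fixes a vertex, stabilises an edge without inversion, or fixes an end of T, then G_{Λ} fixes some vertex of T; moreover, since G_{Λ} is transitive on VΛ, all vertices of Λ are equidistant in T from this fixed vertex. -/

import Mathlib

open Pointwise

section DigraphBasics

variable {V : Type*}

/-- Adjacency in a digraph given by its arc relation. -/
def DigraphAdj (A : V → V → Prop) (u v : V) : Prop := A u v ∨ A v u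

/-- The subdigraph induced on the set `S` is connected. -/
def ConnOn (A : V → V → Prop) (S : Set V) : Prop :=
  ∀ u ∈ S, ∀ v ∈ S,
    Relation.ReflTransGen (fun x y => DigraphAdj A x y ∧ x ∈ S ∧ y ∈ S) u v

/-- A vertex whose removal disconnects the digraph. -/
def IsCutVertex (A : V → V → Prop) (v : V) : Prop := ¬ ConnOn A {v}ᶜ

/-- A digraph has connectivity one if it is connected and the removal of some
single vertex disconnects it. -/
def ConnectivityOne (A : V → V → Prop) : Prop :=
  ConnOn A Set.univ ∧ ∃ v : V, IsCutVertex A v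

/-- The set `S` induces a subdigraph of connectivity strictly greater than one:
it is connected, has at least two vertices, and no single vertex disconnects it. -/
def TwoConnOn (A : V → V → Prop) (S : Set V) : Prop :=
  S.Nontrivial ∧ ConnOn A S ∧ ∀ w ∈ S, ConnOn A (S \ {w})

/-- A lobe of a digraph: a maximal set of vertices inducing a connected subdigraph
of connectivity strictly greater than one. -/
def IsLobe (A : V → V → Prop) (Λ : Set V) : Prop :=
  TwoConnOn A Λ ∧ ∀ Λ' : Set V, TwoConnOn A Λ' → Λ ⊆ Λ' → Λ' = Λ

/-- `r` restricts to an equivalence relation on `S`. -/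
def IsEquivRelOn (S : Set V) (r : V → V → Prop) : Prop :=
  (∀ u ∈ S, r u u) ∧ (∀ u ∈ S, ∀ v ∈ S, r u v → r v u) ∧
  (∀ u ∈ S, ∀ v ∈ S, ∀ w ∈ S, r u v → r v w → r u w)

/-- The subgroup `H` acts transitively on the set `S`. -/
def TransitiveOn {G : Type*} [Group G] [MulAction G V] (H : Subgroup G) (S : Set V) : Prop :=
  ∀ u ∈ S, ∀ v ∈ S, ∃ h ∈ H, h • u = v

/-- The subgroup `H` acts primitively on the set `S`: transitively, and every
`H`-invariant equivalence relation on `S` is trivial or universal. -/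
def PrimitiveOn {G : Type*} [Group G] [MulAction G V] (H : Subgroup G) (S : Set V) : Prop :=
  TransitiveOn H S ∧
  ∀ r : V → V → Prop, IsEquivRelOn S r →
    (∀ h ∈ H, ∀ u ∈ S, ∀ v ∈ S, r u v → r (h • u) (h • v)) →
    (∀ u ∈ S, ∀ v ∈ S, r u v → u = v) ∨ (∀ u ∈ S, ∀ v ∈ S, r u v)

/-- The subgroup `H` acts regularly on the set `S`: transitively, with
point stabilisers acting trivially on `S`. -/
def RegularOn {G : Type*} [Group G] [MulAction G V] (H : Subgroup G) (S : Set V) : Prop :=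
  TransitiveOn H S ∧ ∀ h ∈ H, ∀ v ∈ S, h • v = v → ∀ w ∈ S, h • w = w

end DigraphBasics
section Rays

variable {V : Type*}

/-- A ray (half-line) in a graph: a one-way infinite cycle-free path. -/
def IsRay (T : SimpleGraph V) (f : ℕ → V) : Prop :=
  Function.Injective f ∧ ∀ n : ℕ, T.Adj (f n) (f (n + 1))

/-- `v` is reachable from `u` by a path avoiding the set `F`. -/
def ReachAvoiding (T : SimpleGraph V) (F : Set V) (u v : V) : Prop :=
  Relation.ReflTransGen (fun x y => T.Adj x y ∧ x ∉ F ∧ y ∉ F) u v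

/-- Two rays are equivalent (belong to the same end) if for every finite set of
vertices the rays have points connected by a path avoiding it. -/
def RaysEquivalent (T : SimpleGraph V) (f g : ℕ → V) : Prop :=
  ∀ F : Finset V, ∃ m n : ℕ, f m ∉ (F : Set V) ∧ g n ∉ (F : Set V) ∧
    ReachAvoiding T (F : Set V) (f m) (g n)

end Rays

/-- A ray is thin if its end does not contain infinitely many pairwise disjoint
rays. -/
def IsThinRay {Θ : Type*} (T : SimpleGraph Θ) (f : ℕ → Θ) : Prop :=
  ¬ ∃ D : ℕ → (ℕ → Θ), (∀ i : ℕ, IsRay T (D i) ∧ RaysEquivalent T (D i) f) ∧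
      (∀ i j : ℕ, i ≠ j → ∀ m n : ℕ, D i m ≠ D j n)

/-- A hyperbolic automorphism of a graph: it leaves no nonempty finite set of
vertices invariant and fixes precisely two thin ends. -/
def IsHyperbolic {Θ : Type*} (T : SimpleGraph Θ) (φ : Θ → Θ) : Prop :=
  (∀ F : Finset Θ, F.Nonempty → ¬ ∀ a ∈ F, φ a ∈ F) ∧
  ∃ f₁ f₂ : ℕ → Θ, IsRay T f₁ ∧ IsRay T f₂ ∧ IsThinRay T f₁ ∧ IsThinRay T f₂ ∧
    ¬ RaysEquivalent T f₁ f₂ ∧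
    RaysEquivalent T (fun n => φ (f₁ n)) f₁ ∧
    RaysEquivalent T (fun n => φ (f₂ n)) f₂ ∧
    ∀ f : ℕ → Θ, IsRay T f → RaysEquivalent T (fun n => φ (f n)) f →
      (RaysEquivalent T f f₁ ∨ RaysEquivalent T f f₂)


namespace TreeAux

variable {Θ : Type*} {T : SimpleGraph Θ}

lemma dist_getVert_le (hc : T.Connected) {a b : Θ} (w : T.Walk a b) (i : ℕ) :
    T.dist a (w.getVert i) ≤ i := by
  induction w generalizing i with
  | nil => simp [SimpleGraph.Walk.getVert, SimpleGraph.dist_self]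
  | @cons u v b h p ih =>
    cases i with
    | zero => simp [SimpleGraph.Walk.getVert, SimpleGraph.dist_self]
    | succ n =>
      have h1 : T.dist u v ≤ 1 := by
        simpa using T.dist_le (SimpleGraph.Walk.cons h .nil)
      calc T.dist u ((SimpleGraph.Walk.cons h p).getVert (n+1))
          ≤ T.dist u v + T.dist v (p.getVert n) := hc.dist_triangle
        _ ≤ 1 + n := Nat.add_le_add h1 (ih n)
        _ = n + 1 := Nat.add_comm _ _

lemma dist_getVert_right_le {a b : Θ} (w : T.Walk a b) (i : ℕ) :
    T.dist (w.getVert i) b ≤ w.length - i := by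
  induction w generalizing i with
  | nil => simp [SimpleGraph.Walk.getVert]
  | @cons u v b h p ih =>
    cases i with
    | zero =>
      simpa [SimpleGraph.Walk.getVert] using T.dist_le (SimpleGraph.Walk.cons h p)
    | succ n =>
      simpa [SimpleGraph.Walk.getVert, Nat.succ_sub_succ] using ih n

lemma getVert_mem_support {a b : Θ} (w : T.Walk a b) (i : ℕ) :
    w.getVert i ∈ w.support := by
  induction w generalizing i with
  | nil => simp [SimpleGraph.Walk.getVert]
  | @cons u v b h p ih =>
    cases i with
    | zero => simp [SimpleGraph.Walk.getVert]
    | succ n => simp [SimpleGraph.Walk.getVert_cons_succ, ih n]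

lemma path_support_subset [DecidableEq Θ] (hT : T.IsTree) {a b : Θ} (p q : T.Walk a b) (hp : p.IsPath) :
    p.support ⊆ q.support := by
  have h1 := hT.existsUnique_path a b
  obtain ⟨r, -, hr⟩ := h1
  have h2 : p = (q.toPath : T.Walk a b) := by
    rw [hr p hp, hr (q.toPath : T.Walk a b) q.toPath.2]
  rw [h2]
  exact q.support_toPath_subset

lemma dist_add_dist_of_mem_support [DecidableEq Θ] {s t m : Θ} (w : T.Walk s t) (hm : m ∈ w.support) :
    T.dist s m + T.dist m t ≤ w.length := by
  have := w.take_spec hm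
  calc T.dist s m + T.dist m t
      ≤ (w.takeUntil m hm).length + (w.dropUntil m hm).length :=
        Nat.add_le_add (T.dist_le _) (T.dist_le _)
    _ = w.length := by rw [← SimpleGraph.Walk.length_append, this]

lemma dist_eq_zero (hc : T.Connected) {u v : Θ} (h : T.dist u v = 0) : u = v := by
  rcases SimpleGraph.dist_eq_zero_iff_eq_or_not_reachable.mp h with h | h
  · exact h
  · exact absurd (hc.preconnected u v) h

lemma dist_smul {G : Type*} [Group G] [MulAction G Θ] (hc : T.Connected)
    (hadjT : ∀ (g : G) (u v : Θ), T.Adj u v ↔ T.Adj (g • u) (g • v)) (g : G) (u v : Θ) :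
    T.dist (g • u) (g • v) = T.dist u v := by
  have key : ∀ (g : G) (u v : Θ), T.dist (g • u) (g • v) ≤ T.dist u v := by
    intro g u v
    obtain ⟨p, hp⟩ := (hc.preconnected u v).exists_walk_length_eq_dist
    let f : T →g T := ⟨fun x => g • x, fun hadj => (hadjT g _ _).mp hadj⟩
    have := T.dist_le (p.map f)
    rwa [SimpleGraph.Walk.length_map, hp] at this
  refine le_antisymm (key g u v) ?_
  have := key g⁻¹ (g • u) (g • v)
  simpa using this

/-- Key fixed-point lemma: a group acting on a tree without inversions,
stabilising a finite nonempty set of vertices, fixes a vertex. -/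
lemma tree_fixed_point {G : Type*} [Group G] [MulAction G Θ]
    (hT : T.IsTree)
    (hadjT : ∀ (g : G) (u v : Θ), T.Adj u v ↔ T.Adj (g • u) (g • v))
    (hnoinv : ∀ (g : G) (u v : Θ), T.Adj u v → ¬(g • u = v ∧ g • v = u))
    (H : Subgroup G) (S : Set Θ) (hfin : S.Finite) (hne : S.Nonempty)
    (hinv : ∀ h ∈ H, ∀ s ∈ S, h • s ∈ S) :
    ∃ x : Θ, ∀ h ∈ H, h • x = x := by
  classical
  have hc : T.Connected := hT.isConnected
  have hdist : ∀ (g : G) (u v : Θ), T.dist (g • u) (g • v) = T.dist u v :=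
    fun g u v => dist_smul hc hadjT g u v
  -- diametral pair
  obtain ⟨a, haS, b, hbS, hmax⟩ :
      ∃ a ∈ S, ∃ b ∈ S, ∀ s ∈ S, ∀ t ∈ S, T.dist s t ≤ T.dist a b := by
    obtain ⟨s0, hs0⟩ := hne
    obtain ⟨pr, hpr, hprmax⟩ := (hfin.toFinset ×ˢ hfin.toFinset).exists_max_image
      (fun pr => T.dist pr.1 pr.2) ⟨(s0, s0), by simp [hfin.mem_toFinset, hs0]⟩
    rw [Finset.mem_product, hfin.mem_toFinset, hfin.mem_toFinset] at hpr
    refine ⟨pr.1, hpr.1, pr.2, hpr.2, fun s hs t ht => ?_⟩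
    refine hprmax (s, t) ?_
    rw [Finset.mem_product, hfin.mem_toFinset, hfin.mem_toFinset]
    exact ⟨hs, ht⟩
  set D := T.dist a b with hD
  obtain ⟨p, hpPath, hpLen⟩ := (hc.preconnected a b).exists_path_of_dist
  set k := D / 2 with hk
  set k' := D - D / 2 with hk'
  have hkD : k ≤ D := by omega
  have hk'D : k' ≤ D := by omega
  have coord : ∀ i, i ≤ D → T.dist a (p.getVert i) = i ∧ T.dist (p.getVert i) b = D - i := by
    intro i hi
    have h1 : T.dist a (p.getVert i) ≤ i := dist_getVert_le hc p i
    have h2 : T.dist (p.getVert i) b ≤ D - i := by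
      simpa [hpLen] using dist_getVert_right_le p i
    have h3 : D ≤ T.dist a (p.getVert i) + T.dist (p.getVert i) b := by
      have := hc.dist_triangle (u := a) (v := p.getVert i) (w := b)
      omega
    omega
  have key : ∀ i, i ≤ D → ∀ u : Θ,
      T.dist (p.getVert i) u + i ≤ T.dist a u ∨
      T.dist (p.getVert i) u + (D - i) ≤ T.dist u b := by
    intro i hi u
    obtain ⟨q₁, hq₁⟩ := (hc.preconnected a u).exists_walk_length_eq_dist
    obtain ⟨q₂, hq₂⟩ := (hc.preconnected u b).exists_walk_length_eq_dist
    have hsub := path_support_subset hT p (q₁.append q₂) hpPath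
    have hm : p.getVert i ∈ (q₁.append q₂).support := hsub (getVert_mem_support p i)
    have hcomm : T.dist (p.getVert i) u = T.dist u (p.getVert i) := T.dist_comm
    rcases (SimpleGraph.Walk.mem_support_append_iff _ _).mp hm with hm | hm
    · left
      have h5 := dist_add_dist_of_mem_support q₁ hm
      rw [hq₁] at h5
      have h6 := (coord i hi).1
      omega
    · right
      have h5 := dist_add_dist_of_mem_support q₂ hm
      rw [hq₂] at h5
      have h6 := (coord i hi).2
      omega
  set C : Set Θ := {u | ∀ s ∈ S, T.dist u s ≤ k'} with hC
  have hmemC : ∀ i, (i = k ∨ i = k') → p.getVert i ∈ C := by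
    intro i hi s hs
    have hiD : i ≤ D := by omega
    rcases key i hiD s with h | h
    · have := hmax a haS s hs
      omega
    · have := hmax s hs b hbS
      omega
  have claimB : ∀ u ∈ C, u = p.getVert k ∨ u = p.getVert k' := by
    intro u hu
    have hua : T.dist a u ≤ k' := by
      have := hu a haS
      have hcm : T.dist u a = T.dist a u := T.dist_comm
      omega
    have hub : T.dist u b ≤ k' := hu b hbS
    rcases key k' hk'D u with h | h
    · right
      have hz : T.dist (p.getVert k') u = 0 := by omega
      exact (dist_eq_zero hc hz).symm
    · rcases key k hkD u with h2 | h2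
      swap
      · left
        have hz : T.dist (p.getVert k) u = 0 := by omega
        exact (dist_eq_zero hc hz).symm
      · by_cases hkk : k = k'
        · left
          have hz : T.dist (p.getVert k) u = 0 := by omega
          exact (dist_eq_zero hc hz).symm
        · have hk1 : k' = k + 1 := by omega
          by_cases hz1 : T.dist (p.getVert k) u = 0
          · left; exact (dist_eq_zero hc hz1).symm
          by_cases hz2 : T.dist (p.getVert k') u = 0
          · right; exact (dist_eq_zero hc hz2).symm
          have ha1 : T.Adj (p.getVert k) u := SimpleGraph.dist_eq_one_iff_adj.mp (by omega)
          have ha2 : T.Adj (p.getVert k') u := SimpleGraph.dist_eq_one_iff_adj.mp (by omega)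
          have ha12 : T.Adj (p.getVert k) (p.getVert k') := by
            have hlen : k < p.length := by rw [hpLen]; omega
            have := p.adj_getVert_succ hlen
            rwa [← hk1] at this
          exfalso
          have hP2 : (SimpleGraph.Walk.cons ha1 (SimpleGraph.Walk.cons ha2.symm
              SimpleGraph.Walk.nil)).IsPath := by
            simp [SimpleGraph.Walk.isPath_def, ha1.ne, ha2.ne', ha12.ne]
          have := hT.IsAcyclic.path_unique (SimpleGraph.Path.singleton ha12)
            ⟨SimpleGraph.Walk.cons ha1 (SimpleGraph.Walk.cons ha2.symm SimpleGraph.Walk.nil), hP2⟩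
          have hlen := congrArg (fun q : T.Path (p.getVert k) (p.getVert k') =>
            (q : T.Walk (p.getVert k) (p.getVert k')).length) this
          simp [SimpleGraph.Path.singleton] at hlen
  have hCinv : ∀ h ∈ H, ∀ u, u ∈ C → h • u ∈ C := by
    intro h hh u hu s hs
    have h1 : h⁻¹ • s ∈ S := hinv h⁻¹ (H.inv_mem hh) s hs
    have h2 := hu _ h1
    have h3 : T.dist (h • u) s = T.dist u (h⁻¹ • s) := by
      conv_lhs => rw [show s = h • (h⁻¹ • s) by simp]
      exact hdist h u (h⁻¹ • s)
    omega
  refine ⟨p.getVert k, fun h hh => ?_⟩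
  have hm₁C : p.getVert k ∈ C := hmemC k (Or.inl rfl)
  have hm₂C : p.getVert k' ∈ C := hmemC k' (Or.inr rfl)
  by_cases heq : k = k'
  · rcases claimB _ (hCinv h hh _ hm₁C) with h1 | h1
    · exact h1
    · rw [← heq] at h1; exact h1
  · rcases claimB _ (hCinv h hh _ hm₁C) with h1 | h1
    · exact h1
    · exfalso
      have hne' : p.getVert k ≠ p.getVert k' := by
        intro hcon
        have h6 := (coord k hkD).1
        have h7 := (coord k' hk'D).1
        rw [hcon] at h6
        omega
      have h2 : h • (p.getVert k') = p.getVert k := by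
        rcases claimB _ (hCinv h hh _ hm₂C) with h2 | h2
        · exact h2
        · exact absurd (smul_left_cancel h (h1.trans h2.symm)) hne'
      have hk1 : k' = k + 1 := by omega
      have hadj : T.Adj (p.getVert k) (p.getVert k') := by
        have hlen : k < p.length := by rw [hpLen]; omega
        have := p.adj_getVert_succ hlen
        rwa [← hk1] at this
      exact hnoinv h _ _ hadj ⟨h1, h2⟩

end TreeAux


namespace LobeAux

variable {V : Type*} {A : V → V → Prop}

/-- step relation of `ConnOn`. -/
abbrev Stp (A : V → V → Prop) (S : Set V) (x y : V) : Prop :=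
  DigraphAdj A x y ∧ x ∈ S ∧ y ∈ S

lemma digraphAdj_symm {u v : V} (h : DigraphAdj A u v) : DigraphAdj A v u := h.symm

lemma stp_mono {S S' : Set V} (h : S ⊆ S') {u v : V}
    (hc : Relation.ReflTransGen (Stp A S) u v) : Relation.ReflTransGen (Stp A S') u v :=
  Relation.ReflTransGen.mono (fun x y hxy => ⟨hxy.1, h hxy.2.1, h hxy.2.2⟩) _ _ hc

lemma stp_symm {S : Set V} {u v : V} (hc : Relation.ReflTransGen (Stp A S) u v) :
    Relation.ReflTransGen (Stp A S) v u := by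
  induction hc with
  | refl => exact .refl
  | tail hsub hstep ih =>
    exact Relation.ReflTransGen.trans
      (Relation.ReflTransGen.single ⟨hstep.1.symm, hstep.2.2, hstep.2.1⟩) ih

section Action
variable {G : Type*} [Group G] [MulAction G V]

lemma digraphAdj_smul (hA : ∀ (g : G) (u v : V), A u v ↔ A (g • u) (g • v)) (g : G) {u v : V}
    (h : DigraphAdj A u v) : DigraphAdj A (g • u) (g • v) := by
  rcases h with h | h
  · exact Or.inl ((hA g u v).mp h)
  · exact Or.inr ((hA g v u).mp h)

lemma chain_smul (hA : ∀ (g : G) (u v : V), A u v ↔ A (g • u) (g • v)) (g : G) {S : Set V}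
    {u v : V} (hc : Relation.ReflTransGen (Stp A S) u v) :
    Relation.ReflTransGen (Stp A (g • S)) (g • u) (g • v) := by
  induction hc with
  | refl => exact .refl
  | tail hsub hstep ih =>
    exact ih.tail ⟨digraphAdj_smul hA g hstep.1,
      Set.smul_mem_smul_set hstep.2.1, Set.smul_mem_smul_set hstep.2.2⟩

lemma connOn_smul (hA : ∀ (g : G) (u v : V), A u v ↔ A (g • u) (g • v)) (g : G) {S : Set V}
    (h : ConnOn A S) : ConnOn A (g • S) := by
  rintro u ⟨u₀, hu₀, rfl⟩ v ⟨v₀, hv₀, rfl⟩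
  exact chain_smul hA g (h u₀ hu₀ v₀ hv₀)

lemma twoConnOn_smul (hA : ∀ (g : G) (u v : V), A u v ↔ A (g • u) (g • v)) (g : G) {S : Set V}
    (h : TwoConnOn A S) : TwoConnOn A (g • S) := by
  obtain ⟨⟨x, hx, y, hy, hxy⟩, hconn, hdel⟩ := h
  refine ⟨⟨g • x, Set.smul_mem_smul_set hx, g • y, Set.smul_mem_smul_set hy,
    fun hc => hxy (smul_left_cancel g hc)⟩, connOn_smul hA g hconn, ?_⟩
  rintro w ⟨w₀, hw₀, rfl⟩
  have : g • S \ {g • w₀} = g • (S \ {w₀}) := by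
    rw [Set.smul_set_sdiff, Set.smul_set_singleton]
  rw [this]
  exact connOn_smul hA g (hdel w₀ hw₀)

lemma isLobe_smul (hA : ∀ (g : G) (u v : V), A u v ↔ A (g • u) (g • v)) (g : G) {Λ : Set V}
    (h : IsLobe A Λ) : IsLobe A (g • Λ) := by
  refine ⟨twoConnOn_smul hA g h.1, fun Λ' hΛ' hsub => ?_⟩
  have h1 : Λ ⊆ g⁻¹ • Λ' := by
    intro a ha
    have : g • a ∈ Λ' := hsub (Set.smul_mem_smul_set ha)
    simpa using Set.smul_mem_smul_set (a := g⁻¹) this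
  have h2 := h.2 _ (twoConnOn_smul hA g⁻¹ hΛ') h1
  calc Λ' = g • (g⁻¹ • Λ') := by simp
    _ = g • Λ := by rw [h2]
end Action

lemma union_twoConn {L₁ L₂ : Set V} (h₁ : TwoConnOn A L₁) (h₂ : TwoConnOn A L₂)
    {x y : V} (hx1 : x ∈ L₁) (hx2 : x ∈ L₂) (hy1 : y ∈ L₁) (hy2 : y ∈ L₂) (hxy : x ≠ y) :
    TwoConnOn A (L₁ ∪ L₂) := by
  have hanchor : ∀ w : V, ∀ u ∈ (L₁ ∪ L₂) \ {w}, ∀ p, p ∈ L₁ → p ∈ L₂ → p ≠ w →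
      Relation.ReflTransGen (Stp A ((L₁ ∪ L₂) \ {w})) u p := by
    intro w u hu p hp1 hp2 hpw
    have hsub1 : L₁ \ {w} ⊆ (L₁ ∪ L₂) \ {w} := fun z hz => ⟨Or.inl hz.1, hz.2⟩
    have hsub2 : L₂ \ {w} ⊆ (L₁ ∪ L₂) \ {w} := fun z hz => ⟨Or.inr hz.1, hz.2⟩
    rcases hu.1 with hu1 | hu1
    · by_cases hw : w ∈ L₁
      · exact stp_mono hsub1 (h₁.2.2 w hw u ⟨hu1, hu.2⟩ p ⟨hp1, hpw⟩)
      · refine stp_mono hsub1 ?_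
        refine Relation.ReflTransGen.mono (fun a b hab => ⟨hab.1, ⟨hab.2.1, ?_⟩, ⟨hab.2.2, ?_⟩⟩)
          _ _ (h₁.2.1 u hu1 p hp1)
        · rintro rfl; exact hw hab.2.1
        · rintro rfl; exact hw hab.2.2
    · by_cases hw : w ∈ L₂
      · exact stp_mono hsub2 (h₂.2.2 w hw u ⟨hu1, hu.2⟩ p ⟨hp2, hpw⟩)
      · refine stp_mono hsub2 ?_
        refine Relation.ReflTransGen.mono (fun a b hab => ⟨hab.1, ⟨hab.2.1, ?_⟩, ⟨hab.2.2, ?_⟩⟩)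
          _ _ (h₂.2.1 u hu1 p hp2)
        · rintro rfl; exact hw hab.2.1
        · rintro rfl; exact hw hab.2.2
  constructor
  · exact ⟨x, Or.inl hx1, y, Or.inl hy1, hxy⟩
  constructor
  · intro u hu v hv
    -- use anchor x with a fake deleted vertex not mattering: delete nothing by using w ∉ L₁ ∪ L₂?
    -- simpler: direct
    have c1 : Relation.ReflTransGen (Stp A (L₁ ∪ L₂)) u x := by
      rcases hu with hu | hu
      · exact stp_mono Set.subset_union_left (h₁.2.1 u hu x hx1)
      · exact stp_mono Set.subset_union_right (h₂.2.1 u hu x hx2)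
    have c2 : Relation.ReflTransGen (Stp A (L₁ ∪ L₂)) v x := by
      rcases hv with hv | hv
      · exact stp_mono Set.subset_union_left (h₁.2.1 v hv x hx1)
      · exact stp_mono Set.subset_union_right (h₂.2.1 v hv x hx2)
    exact c1.trans (stp_symm c2)
  · intro w hw u hu v hv
    have hp : ∃ p, p ∈ L₁ ∧ p ∈ L₂ ∧ p ≠ w := by
      by_cases hwx : w = x
      · exact ⟨y, hy1, hy2, by rw [hwx]; exact fun h => hxy h.symm⟩
      · exact ⟨x, hx1, hx2, fun h => hwx h.symm⟩
    obtain ⟨p, hp1, hp2, hpw⟩ := hp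
    exact (hanchor w u hu p hp1 hp2 hpw).trans (stp_symm (hanchor w v hv p hp1 hp2 hpw))

lemma lobe_eq_of_two {L₁ L₂ : Set V} (h₁ : IsLobe A L₁) (h₂ : IsLobe A L₂)
    {x y : V} (hx1 : x ∈ L₁) (hx2 : x ∈ L₂) (hy1 : y ∈ L₁) (hy2 : y ∈ L₂) (hxy : x ≠ y) :
    L₁ = L₂ := by
  have hu := union_twoConn h₁.1 h₂.1 hx1 hx2 hy1 hy2 hxy
  have e1 := h₁.2 _ hu Set.subset_union_left
  have e2 := h₂.2 _ hu Set.subset_union_right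
  exact e1.symm.trans e2

lemma exists_ne_adj {S : Set V} (hconn : ConnOn A S) {u b : V} (hu : u ∈ S) (hb : b ∈ S)
    (hne : u ≠ b) : ∃ v ∈ S, v ≠ u ∧ DigraphAdj A u v := by
  have hc := hconn u hu b hb
  clear hu hb
  induction hc using Relation.ReflTransGen.head_induction_on with
  | refl => exact absurd rfl hne
  | @head a c hstep htail ih =>
    by_cases hac : c = a
    · subst hac
      exact ih hne
    · exact ⟨c, hstep.2.2, hac, hstep.1⟩

/-! ### Gateway (block-cut separation) machinery -/

/-- Underlying simple graph of the digraph. -/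
def Gs (A : V → V → Prop) : SimpleGraph V where
  Adj u v := u ≠ v ∧ DigraphAdj A u v
  symm := ⟨fun u v h => ⟨h.1.symm, h.2.symm⟩⟩
  loopless := ⟨fun u h => h.1 rfl⟩

/-- Reachability from `c` by a chain leaving `Λ` immediately and staying outside. -/
def ReachOut (A : V → V → Prop) (Λ : Set V) (c x : V) : Prop :=
  Relation.ReflTransGen (fun p q => DigraphAdj A p q ∧ q ∉ Λ) c x

lemma reach_exists (hconn : ConnOn A Set.univ) {Λ : Set V} (hΛ : Λ.Nonempty) (x : V) :
    ∃ c ∈ Λ, ReachOut A Λ c x := by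
  obtain ⟨l₀, hl₀⟩ := hΛ
  have hc := hconn l₀ trivial x trivial
  induction hc with
  | refl => exact ⟨l₀, hl₀, .refl⟩
  | tail hsub hstep ih =>
    rename_i b c
    obtain ⟨c₀, hc₀, hr⟩ := ih
    by_cases hcΛ : c ∈ Λ
    · exact ⟨c, hcΛ, .refl⟩
    · exact ⟨c₀, hc₀, hr.tail ⟨hstep.1, hcΛ⟩⟩

lemma reach_exists_within {Λ L : Set V} {c₀ x : V} (hc₀ : c₀ ∈ Λ) (hc₀L : c₀ ∈ L)
    (hchain : Relation.ReflTransGen (LobeAux.Stp A L) c₀ x) :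
    ∃ c, (c ∈ Λ ∧ c ∈ L) ∧ ReachOut A Λ c x := by
  induction hchain with
  | refl => exact ⟨c₀, ⟨hc₀, hc₀L⟩, .refl⟩
  | tail hsub hstep ih =>
    rename_i b c
    obtain ⟨c', hc', hr⟩ := ih
    by_cases hcΛ : c ∈ Λ
    · exact ⟨c, ⟨hcΛ, hstep.2.2⟩, .refl⟩
    · exact ⟨c', hc', hr.tail ⟨hstep.1, hcΛ⟩⟩

lemma reach_mem {Λ : Set V} {c x : V} (h : ReachOut A Λ c x) (hx : x ∈ Λ) : x = c := by
  rcases h.cases_tail with h | ⟨c', _, hstep⟩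
  · exact h
  · exact absurd hx hstep.2

lemma reach_extend {Λ : Set V} {c u v : V} (h : ReachOut A Λ c u)
    (hc : Relation.ReflTransGen (fun p q => DigraphAdj A p q ∧ p ∉ Λ ∧ q ∉ Λ) u v) :
    ReachOut A Λ c v :=
  h.trans (Relation.ReflTransGen.mono (fun x y hxy => ⟨hxy.1, hxy.2.2⟩) _ _ hc)

lemma walk_of_reach {Λ : Set V} {c x : V} (h : ReachOut A Λ c x) :
    ∃ w : (Gs A).Walk c x, ∀ v ∈ w.support, v = c ∨ v ∉ Λ := by
  induction h with
  | refl => exact ⟨.nil, by simp⟩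
  | tail hsub hstep ih =>
    rename_i b z
    obtain ⟨w, hw⟩ := ih
    by_cases hbz : b = z
    · subst hbz
      exact ⟨w, hw⟩
    · refine ⟨w.concat (show (Gs A).Adj b z from ⟨hbz, hstep.1⟩), ?_⟩
      intro v hv
      rw [SimpleGraph.Walk.support_concat] at hv
      rw [List.mem_append] at hv
      rcases hv with hv | hv
      · exact hw v hv
      · rw [List.mem_singleton] at hv
        subst hv
        exact Or.inr hstep.2

lemma walk_to_chain {S : Set V} {u v : V} (w : (Gs A).Walk u v)
    (hS : ∀ z ∈ w.support, z ∈ S) :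
    Relation.ReflTransGen (LobeAux.Stp A S) u v := by
  induction w with
  | nil => exact .refl
  | @cons a b c h p ih =>
    refine Relation.ReflTransGen.head ⟨h.2, hS a (by simp), hS b ?_⟩ (ih ?_)
    · simp [SimpleGraph.Walk.support_cons]
    · intro z hz
      exact hS z (by simp [SimpleGraph.Walk.support_cons, hz])

lemma avoid_start [DecidableEq V] {z v y : V} {P : (Gs A).Walk z v} (hP : P.IsPath)
    (hy : y ∈ P.support) (hyz : y ≠ z) : z ∉ (P.dropUntil y hy).support := by
  intro hzin
  have hnodup := hP.support_nodup
  rw [← P.take_spec hy, SimpleGraph.Walk.support_append] at hnodup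
  have h1 : z ∈ (P.takeUntil y hy).support := SimpleGraph.Walk.start_mem_support _
  have h2 : z ∈ ((P.dropUntil y hy).support).tail := by
    have := SimpleGraph.Walk.support_eq_cons (P.dropUntil y hy)
    rw [this] at hzin
    rcases List.mem_cons.mp hzin with h | h
    · exact absurd h.symm hyz
    · exact h
  exact (List.disjoint_of_nodup_append hnodup) h1 h2

lemma avoid_end [DecidableEq V] {u z y : V} {P : (Gs A).Walk u z} (hP : P.IsPath)
    (hy : y ∈ P.support) (hyz : y ≠ z) : z ∉ (P.takeUntil y hy).support := by
  intro hzin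
  have hnodup := hP.support_nodup
  rw [← P.take_spec hy, SimpleGraph.Walk.support_append] at hnodup
  have h1 : z ∈ ((P.dropUntil y hy).support).tail := by
    have hz : z ∈ (P.dropUntil y hy).support := SimpleGraph.Walk.end_mem_support _
    have := SimpleGraph.Walk.support_eq_cons (P.dropUntil y hy)
    rw [this] at hz
    rcases List.mem_cons.mp hz with h | h
    · exact absurd h.symm hyz
    · exact h
  exact (List.disjoint_of_nodup_append hnodup) hzin h1

lemma connect_avoiding [DecidableEq V] {c₁ c₂ : V} {Q : (Gs A).Walk c₁ c₂} (hQ : Q.IsPath)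
    {y : V} (hy : y ∈ Q.support) (z : V) (hyz : y ≠ z) :
    (∃ R : (Gs A).Walk y c₂, z ∉ R.support ∧ ∀ t ∈ R.support, t ∈ Q.support) ∨
    (∃ R : (Gs A).Walk c₁ y, z ∉ R.support ∧ ∀ t ∈ R.support, t ∈ Q.support) := by
  by_cases hz : z ∈ Q.support
  · have hy' := hy
    rw [← Q.take_spec hz, SimpleGraph.Walk.mem_support_append_iff] at hy'
    rcases hy' with hy' | hy'
    · right
      refine ⟨(Q.takeUntil z hz).takeUntil y hy', avoid_end (hQ.takeUntil hz) hy' hyz, ?_⟩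
      intro t ht
      exact SimpleGraph.Walk.support_takeUntil_subset _ hz
        (SimpleGraph.Walk.support_takeUntil_subset _ hy' ht)
    · left
      refine ⟨(Q.dropUntil z hz).dropUntil y hy', avoid_start (hQ.dropUntil hz) hy' hyz, ?_⟩
      intro t ht
      exact SimpleGraph.Walk.support_dropUntil_subset _ hz
        (SimpleGraph.Walk.support_dropUntil_subset _ hy' ht)
  · left
    refine ⟨Q.dropUntil y hy, ?_, fun t ht => SimpleGraph.Walk.support_dropUntil_subset _ hy ht⟩
    intro hzin
    exact hz (SimpleGraph.Walk.support_dropUntil_subset _ hy hzin)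

lemma ear_twoConn [DecidableEq V] {Λ : Set V} (hΛ2 : TwoConnOn A Λ) {c₁ c₂ : V}
    (hc₁ : c₁ ∈ Λ) (hc₂ : c₂ ∈ Λ) (Q : (Gs A).Walk c₁ c₂) (hQ : Q.IsPath)
    (hsupp : ∀ z ∈ Q.support, z = c₁ ∨ z = c₂ ∨ z ∉ Λ) :
    TwoConnOn A (Λ ∪ {v | v ∈ Q.support}) := by
  set E := Λ ∪ {v | v ∈ Q.support} with hE
  have hΛE : Λ ⊆ E := Set.subset_union_left
  have hQE : ∀ t ∈ Q.support, t ∈ E := fun t ht => Or.inr ht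
  have conn_to_anchor : ∀ u ∈ E, ∃ anchor ∈ Λ,
      Relation.ReflTransGen (LobeAux.Stp A E) u anchor := by
    intro u hu
    rcases hu with hu | hu
    · exact ⟨u, hu, .refl⟩
    · refine ⟨c₂, hc₂, ?_⟩
      exact walk_to_chain (Q.dropUntil u hu)
        (fun z hz => hQE z (SimpleGraph.Walk.support_dropUntil_subset _ hu hz))
  have conn_del : ∀ w, ∀ u, u ∈ E → u ≠ w → ∃ anchor, anchor ∈ Λ ∧ anchor ≠ w ∧
      Relation.ReflTransGen (LobeAux.Stp A (E \ {w})) u anchor := by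
    intro w u hu hne
    rcases hu with hu | hu
    · exact ⟨u, hu, hne, .refl⟩
    · rcases connect_avoiding hQ hu w hne with ⟨R, hRz, hRsub⟩ | ⟨R, hRz, hRsub⟩
      · refine ⟨c₂, hc₂, ?_, ?_⟩
        · intro hcon
          exact hRz (hcon ▸ SimpleGraph.Walk.end_mem_support R)
        · exact walk_to_chain R (fun z hz => ⟨hQE z (hRsub z hz), fun hzw => hRz (hzw ▸ hz)⟩)
      · refine ⟨c₁, hc₁, ?_, ?_⟩
        · intro hcon
          exact hRz (hcon ▸ SimpleGraph.Walk.start_mem_support R)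
        · exact stp_symm
            (walk_to_chain R (fun z hz => ⟨hQE z (hRsub z hz), fun hzw => hRz (hzw ▸ hz)⟩))
  refine ⟨hΛ2.1.mono hΛE, ?_, ?_⟩
  · intro u hu v hv
    obtain ⟨au, hau, cu⟩ := conn_to_anchor u hu
    obtain ⟨av, hav, cv⟩ := conn_to_anchor v hv
    have cmid : Relation.ReflTransGen (LobeAux.Stp A E) au av :=
      stp_mono hΛE (hΛ2.2.1 au hau av hav)
    exact (cu.trans cmid).trans (stp_symm cv)
  · intro w hw u hu v hv
    obtain ⟨au, hau, hauw, cu⟩ := conn_del w u hu.1 hu.2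
    obtain ⟨av, hav, havw, cv⟩ := conn_del w v hv.1 hv.2
    have cmid : Relation.ReflTransGen (LobeAux.Stp A (E \ {w})) au av := by
      by_cases hwΛ : w ∈ Λ
      · exact stp_mono (show Λ \ {w} ⊆ E \ {w} from fun z hz => ⟨hΛE hz.1, hz.2⟩)
          (hΛ2.2.2 w hwΛ au ⟨hau, hauw⟩ av ⟨hav, havw⟩)
      · refine Relation.ReflTransGen.mono
          (fun a b hab => ⟨hab.1, ⟨hΛE hab.2.1, fun hc => hwΛ (hc ▸ hab.2.1)⟩,
            ⟨hΛE hab.2.2, fun hc => hwΛ (hc ▸ hab.2.2)⟩⟩) _ _ (hΛ2.2.1 au hau av hav)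
    exact (cu.trans cmid).trans (stp_symm cv)

lemma reach_unique [DecidableEq V] {Λ : Set V} (hΛ : IsLobe A Λ) {c₁ c₂ x : V}
    (hc₁ : c₁ ∈ Λ) (hc₂ : c₂ ∈ Λ) (h₁ : ReachOut A Λ c₁ x) (h₂ : ReachOut A Λ c₂ x) :
    c₁ = c₂ := by
  by_contra hne
  by_cases hxΛ : x ∈ Λ
  · exact hne ((reach_mem h₁ hxΛ).symm.trans (reach_mem h₂ hxΛ))
  obtain ⟨w₁, hw₁⟩ := walk_of_reach h₁
  obtain ⟨w₂, hw₂⟩ := walk_of_reach h₂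
  set W : (Gs A).Walk c₁ c₂ := w₁.append w₂.reverse with hW
  have hWsup : ∀ z ∈ W.support, z = c₁ ∨ z = c₂ ∨ z ∉ Λ := by
    intro z hz
    rw [hW, SimpleGraph.Walk.mem_support_append_iff] at hz
    rcases hz with hz | hz
    · rcases hw₁ z hz with h | h
      · exact Or.inl h
      · exact Or.inr (Or.inr h)
    · rw [SimpleGraph.Walk.support_reverse, List.mem_reverse] at hz
      rcases hw₂ z hz with h | h
      · exact Or.inr (Or.inl h)
      · exact Or.inr (Or.inr h)
  set Q : (Gs A).Walk c₁ c₂ := (W.toPath : (Gs A).Walk c₁ c₂) with hQdef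
  have hQ : Q.IsPath := W.toPath.2
  have hQsup : ∀ z ∈ Q.support, z = c₁ ∨ z = c₂ ∨ z ∉ Λ :=
    fun z hz => hWsup z (W.support_toPath_subset hz)
  by_cases hall : ∀ z ∈ Q.support, z ∈ Λ
  · have hQnil : ¬ Q.Nil := by
      rw [SimpleGraph.Walk.nil_iff_length_eq]
      intro h0
      exact hne (SimpleGraph.Walk.eq_of_length_eq_zero h0)
    obtain ⟨y, hadj, q, hQeq⟩ := SimpleGraph.Walk.not_nil_iff.mp hQnil
    have hysup : y ∈ Q.support := by
      rw [hQeq]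
      simp [SimpleGraph.Walk.support_cons]
    have hyc₂ : y = c₂ := by
      rcases hQsup y hysup with h | h | h
      · exact absurd h.symm hadj.1
      · exact h
      · exact absurd (hall y hysup) h
    have hedge0 : s(c₁, y) ∈ Q.edges := by
      rw [hQeq]
      simp
    have hedge : s(c₁, c₂) ∈ Q.edges := hyc₂ ▸ hedge0
    have hedge' : s(c₁, c₂) ∈ W.edges := W.edges_toPath_subset hedge
    rw [hW, SimpleGraph.Walk.edges_append, List.mem_append] at hedge'
    rcases hedge' with he | he
    · have := SimpleGraph.Walk.snd_mem_support_of_mem_edges w₁ he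
      rcases hw₁ c₂ this with h | h
      · exact hne h.symm
      · exact h hc₂
    · rw [SimpleGraph.Walk.edges_reverse, List.mem_reverse] at he
      have := SimpleGraph.Walk.fst_mem_support_of_mem_edges w₂ he
      rcases hw₂ c₁ this with h | h
      · exact hne h
      · exact h hc₁
  · push_neg at hall
    obtain ⟨z₀, hz₀Q, hz₀Λ⟩ := hall
    have hE := ear_twoConn hΛ.1 hc₁ hc₂ Q hQ hQsup
    have heq := hΛ.2 _ hE Set.subset_union_left
    have : z₀ ∈ Λ := by
      rw [← heq]
      exact Or.inr hz₀Q
    exact hz₀Λ this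

/-! ### tails, heads and transitivity of the lobe stabiliser -/

def TsetOf (A : V → V → Prop) (S : Set V) : Set V :=
  {u | u ∈ S ∧ ∃ v, v ∈ S ∧ v ≠ u ∧ A u v}

def HsetOf (A : V → V → Prop) (S : Set V) : Set V :=
  {u | u ∈ S ∧ ∃ v, v ∈ S ∧ v ≠ u ∧ A v u}

section Action2
variable {G : Type*} [Group G] [MulAction G V]

lemma Tset_smul (hA : ∀ (g : G) (u v : V), A u v ↔ A (g • u) (g • v)) (g : G) (S : Set V) :
    TsetOf A (g • S) = g • TsetOf A S := by
  ext x
  constructor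
  · rintro ⟨⟨x₀, hx₀, rfl⟩, v, ⟨v₀, hv₀, rfl⟩, hvx, hAxv⟩
    refine Set.smul_mem_smul_set ⟨hx₀, v₀, hv₀, ?_, (hA g x₀ v₀).mpr hAxv⟩
    rintro rfl
    exact hvx rfl
  · rintro ⟨x₀, ⟨hx₀S, v₀, hv₀, hne, hAx⟩, rfl⟩
    exact ⟨Set.smul_mem_smul_set hx₀S, g • v₀, Set.smul_mem_smul_set hv₀,
      fun hc => hne (smul_left_cancel g hc), (hA g _ _).mp hAx⟩

lemma Hset_smul (hA : ∀ (g : G) (u v : V), A u v ↔ A (g • u) (g • v)) (g : G) (S : Set V) :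
    HsetOf A (g • S) = g • HsetOf A S := by
  ext x
  constructor
  · rintro ⟨⟨x₀, hx₀, rfl⟩, v, ⟨v₀, hv₀, rfl⟩, hvx, hAxv⟩
    refine Set.smul_mem_smul_set ⟨hx₀, v₀, hv₀, ?_, (hA g v₀ x₀).mpr hAxv⟩
    rintro rfl
    exact hvx rfl
  · rintro ⟨x₀, ⟨hx₀S, v₀, hv₀, hne, hAx⟩, rfl⟩
    exact ⟨Set.smul_mem_smul_set hx₀S, g • v₀, Set.smul_mem_smul_set hv₀,
      fun hc => hne (smul_left_cancel g hc), (hA g _ _).mp hAx⟩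

lemma lobe_stab_trans
    (hA : ∀ (g : G) (u v : V), A u v ↔ A (g • u) (g • v))
    (hprim : ∀ r : V → V → Prop,
      ((∀ u ∈ (Set.univ : Set V), r u u) ∧
        (∀ u ∈ (Set.univ : Set V), ∀ v ∈ (Set.univ : Set V), r u v → r v u) ∧
        (∀ u ∈ (Set.univ : Set V), ∀ v ∈ (Set.univ : Set V), ∀ w ∈ (Set.univ : Set V),
          r u v → r v w → r u w)) →
      (∀ h ∈ (⊤ : Subgroup G), ∀ u ∈ (Set.univ : Set V), ∀ v ∈ (Set.univ : Set V),
        r u v → r (h • u) (h • v)) →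
      (∀ u ∈ (Set.univ : Set V), ∀ v ∈ (Set.univ : Set V), r u v → u = v) ∨
      (∀ u ∈ (Set.univ : Set V), ∀ v ∈ (Set.univ : Set V), r u v))
    (harctrans : ∀ u v u' v' : V, A u v → A u' v' → ∃ g : G, g • u = u' ∧ g • v = v')
    (hconn : ConnOn A Set.univ) {Λ : Set V} (hΛ : IsLobe A Λ)
    (hthree : ∃ a b c : V, a ∈ Λ ∧ b ∈ Λ ∧ c ∈ Λ ∧ a ≠ b ∧ a ≠ c ∧ b ≠ c) :
    ∀ a ∈ Λ, ∀ b ∈ Λ, ∃ g : G, g • Λ = Λ ∧ g • a = b := by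
  classical
  obtain ⟨a₀, b₀, c₀, ha₀, hb₀, hc₀, hab₀, hac₀, hbc₀⟩ := hthree
  have hΛne : Λ.Nonempty := ⟨a₀, ha₀⟩
  have harc : ∀ u v u' v' : V, u ∈ Λ → v ∈ Λ → u' ∈ Λ → v' ∈ Λ → u' ≠ v' →
      A u v → A u' v' → ∃ g : G, g • Λ = Λ ∧ g • u = u' ∧ g • v = v' := by
    intro u v u' v' hu hv hu' hv' hu'v' hAuv hAu'v'
    obtain ⟨g, hg1, hg2⟩ := harctrans u v u' v' hAuv hAu'v'
    have hlobe' := isLobe_smul hA g hΛ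
    have hM : g • Λ = Λ := by
      apply lobe_eq_of_two hlobe' hΛ (x := u') (y := v') ?_ hu' ?_ hv' hu'v'
      · rw [← hg1]; exact Set.smul_mem_smul_set hu
      · rw [← hg2]; exact Set.smul_mem_smul_set hv
    exact ⟨g, hM, hg1, hg2⟩
  set Ts := TsetOf A Λ with hTs
  set Hs := HsetOf A Λ with hHs
  have cover : ∀ u ∈ Λ, u ∈ Ts ∨ u ∈ Hs := by
    intro u hu
    have hb : ∃ b ∈ Λ, b ≠ u := by
      by_cases h : a₀ = u
      · refine ⟨b₀, hb₀, fun hc => hab₀ ?_⟩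
        rw [h, ← hc]
      · exact ⟨a₀, ha₀, h⟩
    obtain ⟨b, hbΛ, hbu⟩ := hb
    obtain ⟨v, hvΛ, hvu, hadj⟩ := exists_ne_adj hΛ.1.2.1 hu hbΛ (fun hc => hbu hc.symm)
    rcases hadj with h | h
    · exact Or.inl ⟨hu, v, hvΛ, hvu, h⟩
    · exact Or.inr ⟨hu, v, hvΛ, hvu, h⟩
  have hTne : Ts.Nonempty ∧ Hs.Nonempty := by
    rcases cover a₀ ha₀ with h | h
    · have h' := h
      obtain ⟨_, v, hvΛ, hvne, hAv⟩ := h'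
      exact ⟨⟨a₀, h⟩, ⟨v, ⟨hvΛ, a₀, ha₀, fun hc => hvne hc.symm, hAv⟩⟩⟩
    · have h' := h
      obtain ⟨_, v, hvΛ, hvne, hAv⟩ := h'
      exact ⟨⟨v, ⟨hvΛ, a₀, ha₀, fun hc => hvne hc.symm, hAv⟩⟩, ⟨a₀, h⟩⟩
  have hmeet : ∃ w, w ∈ Ts ∧ w ∈ Hs := by
    by_contra hdisj0
    have hdisj : ∀ w, w ∈ Ts → w ∉ Hs := fun w h1 h2 => hdisj0 ⟨w, h1, h2⟩
    have hcls : ∀ x : V, ∃ c ∈ Λ, ReachOut A Λ c x := reach_exists hconn hΛne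
    set cls : V → V := fun x => Classical.choose (hcls x) with hclsdef
    have clsΛ : ∀ x, cls x ∈ Λ := fun x => (Classical.choose_spec (hcls x)).1
    have clsR : ∀ x, ReachOut A Λ (cls x) x := fun x => (Classical.choose_spec (hcls x)).2
    have cls_eq : ∀ {c x : V}, c ∈ Λ → ReachOut A Λ c x → cls x = c :=
      fun {c x} hc hr => reach_unique hΛ (clsΛ x) hc (clsR x) hr
    have cls_self : ∀ {x : V}, x ∈ Λ → cls x = x := fun {x} hx => cls_eq hx .refl
    set stp2 : V → V → Prop := fun u v => ∃ g : G,
      (u ∈ g • Ts ∧ v ∈ g • Ts) ∨ (u ∈ g • Hs ∧ v ∈ g • Hs) with hstp2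
    set r : V → V → Prop := fun u v => Relation.ReflTransGen stp2 u v with hr
    have hstp2symm : ∀ {u v}, stp2 u v → stp2 v u := by
      rintro u v ⟨g, h | h⟩
      · exact ⟨g, Or.inl ⟨h.2, h.1⟩⟩
      · exact ⟨g, Or.inr ⟨h.2, h.1⟩⟩
    have hrsymm : ∀ {u v}, r u v → r v u := by
      intro u v h
      induction h with
      | refl => exact .refl
      | tail hs hstep ih =>
        exact Relation.ReflTransGen.trans (Relation.ReflTransGen.single (hstp2symm hstep)) ih
    have hrequiv : (∀ u ∈ (Set.univ : Set V), r u u) ∧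
        (∀ u ∈ (Set.univ : Set V), ∀ v ∈ (Set.univ : Set V), r u v → r v u) ∧
        (∀ u ∈ (Set.univ : Set V), ∀ v ∈ (Set.univ : Set V), ∀ w ∈ (Set.univ : Set V),
          r u v → r v w → r u w) :=
      ⟨fun u _ => .refl, fun u _ v _ h => hrsymm h,
        fun u _ v _ w _ h1 h2 => h1.trans h2⟩
    have hrinv : ∀ (h : G), ∀ u v, r u v → r (h • u) (h • v) := by
      intro h u v hruv
      induction hruv with
      | refl => exact .refl
      | tail hs hstep ih =>
        refine ih.tail ?_
        obtain ⟨g, hg | hg⟩ := hstep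
        · refine ⟨h * g, Or.inl ⟨?_, ?_⟩⟩
          · rw [mul_smul]; exact Set.smul_mem_smul_set hg.1
          · rw [mul_smul]; exact Set.smul_mem_smul_set hg.2
        · refine ⟨h * g, Or.inr ⟨?_, ?_⟩⟩
          · rw [mul_smul]; exact Set.smul_mem_smul_set hg.1
          · rw [mul_smul]; exact Set.smul_mem_smul_set hg.2
    rcases hprim r hrequiv (fun h _ u _ v _ hruv => hrinv h u v hruv) with htriv | huniv
    · have hpair : ∃ u v, u ≠ v ∧ stp2 u v := by
        rcases cover a₀ ha₀ with h1 | h1 <;> rcases cover b₀ hb₀ with h2 | h2 <;>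
          rcases cover c₀ hc₀ with h3 | h3
        all_goals first
          | exact ⟨a₀, b₀, hab₀, 1, Or.inl (by rw [one_smul]; exact ⟨h1, h2⟩)⟩
          | exact ⟨a₀, b₀, hab₀, 1, Or.inr (by rw [one_smul]; exact ⟨h1, h2⟩)⟩
          | exact ⟨a₀, c₀, hac₀, 1, Or.inl (by rw [one_smul]; exact ⟨h1, h3⟩)⟩
          | exact ⟨a₀, c₀, hac₀, 1, Or.inr (by rw [one_smul]; exact ⟨h1, h3⟩)⟩
          | exact ⟨b₀, c₀, hbc₀, 1, Or.inl (by rw [one_smul]; exact ⟨h2, h3⟩)⟩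
          | exact ⟨b₀, c₀, hbc₀, 1, Or.inr (by rw [one_smul]; exact ⟨h2, h3⟩)⟩
      obtain ⟨u, v, huv, hs⟩ := hpair
      exact huv (htriv u trivial v trivial (Relation.ReflTransGen.single hs))
    · have hφ : ∀ {u v}, stp2 u v → (cls u ∈ Ts ↔ cls v ∈ Ts) := by
        rintro u v ⟨g, hside⟩
        by_cases hgΛ : g • Λ = Λ
        · have hTg : g • Ts = Ts := by
            rw [hTs, ← Tset_smul hA g Λ, hgΛ]
          have hHg : g • Hs = Hs := by
            rw [hHs, ← Hset_smul hA g Λ, hgΛ]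
          rcases hside with ⟨hu, hv⟩ | ⟨hu, hv⟩
          · rw [hTg] at hu hv
            rw [cls_self hu.1, cls_self hv.1]
            exact iff_of_true hu hv
          · rw [hHg] at hu hv
            rw [cls_self hu.1, cls_self hv.1]
            exact iff_of_false (fun hc => hdisj u hc hu) (fun hc => hdisj v hc hv)
        · set L := g • Λ with hL
          have hLlobe : IsLobe A L := isLobe_smul hA g hΛ
          have hsubsing : ∀ z z', z ∈ L → z ∈ Λ → z' ∈ L → z' ∈ Λ → z = z' := by
            intro z z' h1 h2 h3 h4
            by_contra hzz
            exact hgΛ (lobe_eq_of_two hLlobe hΛ h1 h2 h3 h4 hzz)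
          have hTsub : g • Ts ⊆ L := Set.smul_set_mono (fun x hx => hx.1)
          have hHsub : g • Hs ⊆ L := Set.smul_set_mono (fun x hx => hx.1)
          have huL : u ∈ L := by
            rcases hside with ⟨hu, _⟩ | ⟨hu, _⟩
            · exact hTsub hu
            · exact hHsub hu
          have hvL : v ∈ L := by
            rcases hside with ⟨_, hv⟩ | ⟨_, hv⟩
            · exact hTsub hv
            · exact hHsub hv
          have key : ∀ p q : V, p ∈ L → q ∈ L → p ∈ Λ → cls q = p := by
            intro p q hpL hqL hpΛ
            by_cases hqΛ : q ∈ Λ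
            · rw [cls_self hqΛ]
              exact hsubsing q p hqL hqΛ hpL hpΛ
            · have hchain := hLlobe.1.2.1 p hpL q hqL
              obtain ⟨c, ⟨hcΛ, hcL⟩, hrc⟩ := reach_exists_within hpΛ hpL hchain
              have hcp : c = p := hsubsing c p hcL hcΛ hpL hpΛ
              exact cls_eq hpΛ (hcp ▸ hrc)
          have main : cls u = cls v := by
            by_cases huΛ : u ∈ Λ
            · rw [cls_self huΛ, key u v huL hvL huΛ]
            by_cases hvΛ : v ∈ Λ
            · rw [cls_self hvΛ, key v u hvL huL hvΛ]
            by_cases hint : ∃ c0, c0 ∈ L ∧ c0 ∈ Λ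
            · obtain ⟨c0, hc0L, hc0Λ⟩ := hint
              have hchain := hLlobe.1.2.2 c0 hc0L u ⟨huL, fun hc => huΛ (by
                  rw [Set.mem_singleton_iff] at hc; rw [hc]; exact hc0Λ)⟩
                v ⟨hvL, fun hc => hvΛ (by
                  rw [Set.mem_singleton_iff] at hc; rw [hc]; exact hc0Λ)⟩
              have hout : ∀ z, z ∈ L \ {c0} → z ∉ Λ := fun z hz hzΛ =>
                hz.2 (hsubsing z c0 hz.1 hzΛ hc0L hc0Λ)
              have hreach := reach_extend (clsR u) (Relation.ReflTransGen.mono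
                (fun x y hxy => ⟨hxy.1, hout x hxy.2.1, hout y hxy.2.2⟩) _ _ hchain)
              exact (cls_eq (clsΛ u) hreach).symm
            · push_neg at hint
              have hchain := hLlobe.1.2.1 u huL v hvL
              have hreach := reach_extend (clsR u) (Relation.ReflTransGen.mono
                (fun x y hxy => ⟨hxy.1, hint x hxy.2.1, hint y hxy.2.2⟩) _ _ hchain)
              exact (cls_eq (clsΛ u) hreach).symm
          rw [main]
      have hφr : ∀ {u v}, r u v → (cls u ∈ Ts ↔ cls v ∈ Ts) := by
        intro u v h
        induction h with
        | refl => exact Iff.rfl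
        | tail hs hstep ih => exact ih.trans (hφ hstep)
      obtain ⟨⟨t, htT⟩, ⟨h₀, hh₀H⟩⟩ := hTne
      have hiff := hφr (huniv t trivial h₀ trivial)
      rw [cls_self htT.1, cls_self hh₀H.1] at hiff
      exact hdisj h₀ (hiff.mp htT) hh₀H
  obtain ⟨w, hwT, hwH⟩ := hmeet
  have tow : ∀ a ∈ Λ, ∃ g : G, g • Λ = Λ ∧ g • a = w := by
    intro a ha
    rcases cover a ha with h | h
    · obtain ⟨_, v, hvΛ, hvne, hAv⟩ := h
      have hwT' := hwT
      obtain ⟨hwΛ, vw, hvwΛ, hvwne, hAvw⟩ := hwT'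
      obtain ⟨g, hg, hg1, _⟩ := harc a v w vw ha hvΛ hwΛ hvwΛ
        (fun hc => hvwne hc.symm) hAv hAvw
      exact ⟨g, hg, hg1⟩
    · obtain ⟨_, v, hvΛ, hvne, hAv⟩ := h
      have hwH' := hwH
      obtain ⟨hwΛ, vw, hvwΛ, hvwne, hAvw⟩ := hwH'
      obtain ⟨g, hg, _, hg2⟩ := harc v a vw w hvΛ ha hvwΛ hwΛ hvwne hAv hAvw
      exact ⟨g, hg, hg2⟩
  intro a ha b hb
  obtain ⟨g₁, hg₁, hga⟩ := tow a ha
  obtain ⟨g₂, hg₂, hgb⟩ := tow b hb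
  refine ⟨g₂⁻¹ * g₁, ?_, ?_⟩
  · rw [mul_smul, hg₁, inv_smul_eq_iff, hg₂]
  · rw [mul_smul, hga, inv_smul_eq_iff, hgb]

end Action2

end LobeAux


/-- Let `G` act primitively on the vertices and transitively on
the arcs of a locally finite connectivity-one digraph `Γ`, and let `Λ` be a finite
lobe with at least three vertices. Let `T` be any tree on which `G` acts (the
vertices of `Γ` embedding equivariantly in `T`), such that the setwise stabiliser
`G_{Λ}` contains no hyperbolic element and `G_{Λ}` fixes a vertex, stabilises an
edge without inversion, or fixes an end of `T`. Then `G_{Λ}` fixes some vertex of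
`T`, and all vertices of `Λ` are equidistant in `T` from this fixed vertex. -/
theorem lobe_stabiliser_fixes_tree_vertex
    {Ω Θ : Type*} {G : Type*} [Group G] [MulAction G Ω] [MulAction G Θ]
    (A : Ω → Ω → Prop)
    (hA : ∀ (g : G) (u v : Ω), A u v ↔ A (g • u) (g • v))
    (hvprim : PrimitiveOn (⊤ : Subgroup G) (Set.univ : Set Ω))
    (harctrans : ∀ u v u' v' : Ω, A u v → A u' v' → ∃ g : G, g • u = u' ∧ g • v = v')
    (hconn1 : ConnectivityOne A)
    (hlf : ∀ v : Ω, {w : Ω | DigraphAdj A v w}.Finite)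
    (Λ : Set Ω) (hΛ : IsLobe A Λ) (hΛfin : Λ.Finite)
    (hthree : ∃ a b c : Ω, a ∈ Λ ∧ b ∈ Λ ∧ c ∈ Λ ∧ a ≠ b ∧ a ≠ c ∧ b ≠ c)
    (T : SimpleGraph Θ) (hT : T.IsTree)
    (hadjT : ∀ (g : G) (u v : Θ), T.Adj u v ↔ T.Adj (g • u) (g • v))
    (hnoinv : ∀ (g : G) (u v : Θ), T.Adj u v → ¬(g • u = v ∧ g • v = u))
    (ι : Ω → Θ) (hι : Function.Injective ι)
    (hιequiv : ∀ (g : G) (a : Ω), ι (g • a) = g • ι a)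
    (hnohyp : ∀ h ∈ MulAction.stabilizer G Λ, ¬ IsHyperbolic T (fun θ => h • θ))
    (htrich :
      (∃ v : Θ, ∀ h ∈ MulAction.stabilizer G Λ, h • v = v) ∨
      (∃ u v : Θ, T.Adj u v ∧
        ∀ h ∈ MulAction.stabilizer G Λ, ({h • u, h • v} : Set Θ) = {u, v}) ∨
      (∃ f : ℕ → Θ, IsRay T f ∧
        ∀ h ∈ MulAction.stabilizer G Λ, RaysEquivalent T (fun n => h • f n) f)) :
    ∃ x : Θ, (∀ h ∈ MulAction.stabilizer G Λ, h • x = x) ∧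
      ∀ a ∈ Λ, ∀ b ∈ Λ, T.dist (ι a) x = T.dist (ι b) x := by
  classical
  have htrans := LobeAux.lobe_stab_trans hA
    (fun r hr hinv => hvprim.2 r hr hinv) harctrans hconn1.1 hΛ hthree
  set S : Set Θ := ι '' Λ with hS
  have hfin : S.Finite := hΛfin.image ι
  obtain ⟨a₀, b₀, c₀, ha₀, hb₀, hc₀, -, -, -⟩ := hthree
  have hne : S.Nonempty := ⟨ι a₀, ⟨a₀, ha₀, rfl⟩⟩
  have hinv : ∀ h ∈ MulAction.stabilizer G Λ, ∀ s ∈ S, h • s ∈ S := by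
    intro h hh s hs
    obtain ⟨a, ha, rfl⟩ := hs
    have hhΛ : h • Λ = Λ := MulAction.mem_stabilizer_iff.mp hh
    have haΛ : h • a ∈ Λ := by
      rw [← hhΛ]
      exact Set.smul_mem_smul_set ha
    exact ⟨h • a, haΛ, hιequiv h a⟩
  obtain ⟨x, hx⟩ := TreeAux.tree_fixed_point hT hadjT hnoinv
    (MulAction.stabilizer G Λ) S hfin hne hinv
  refine ⟨x, hx, ?_⟩
  intro a ha b hb
  obtain ⟨g, hgΛ, hgab⟩ := htrans a ha b hb
  have hgstab : g ∈ MulAction.stabilizer G Λ := MulAction.mem_stabilizer_iff.mpr hgΛ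
  calc T.dist (ι a) x = T.dist (g • ι a) (g • x) :=
        (TreeAux.dist_smul hT.isConnected hadjT g (ι a) x).symm
    _ = T.dist (ι (g • a)) x := by rw [hιequiv, hx g hgstab]
    _ = T.dist (ι b) x := by rw [hgab]
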